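/- arXiv:2310.13576 — 3 statements merged into one kernel-verified Lean document; each statement's English description precedes it below -/
import Mathlib

section
/- Let G be a directed acyclic graph and let G' = G ∪ {(i,j)} be acyclic. Suppose (x,y) is not an edge of G', adding (x,y) to G does not create a cycle in G, x is not a descendant of j in G', and y is not an ancestor of i in G'. Then adding (x,y) to G' does not create a cycle. -/
def addEdge {V : Type*} (E : V → V → Prop) (i j : V) : V → V → Prop :=
  fun a b => E a b ∨ (a = i ∧ b = j)

def Acyclic {V : Type*} (E : V → V → Prop) : Prop :=
  ∀ v, ¬ Relation.TransGen E v v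

lemma addEdge_split {V : Type*} {F : V → V → Prop} {a b u v : V}
    (h : Relation.ReflTransGen (addEdge F a b) u v) :
    Relation.ReflTransGen F u v ∨
      (Relation.ReflTransGen F u a ∧ Relation.ReflTransGen F b v) := by
  induction h using Relation.ReflTransGen.head_induction_on with
  | refl => exact Or.inl .refl
  | head e _ ih =>
    rcases e with e | ⟨rfl, rfl⟩
    · rcases ih with h | ⟨h1, h2⟩
      · exact Or.inl (Relation.ReflTransGen.head e h)
      · exact Or.inr ⟨Relation.ReflTransGen.head e h1, h2⟩
    · rcases ih with h | ⟨h1, h2⟩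
      · exact Or.inr ⟨.refl, h⟩
      · exact Or.inr ⟨.refl, h2⟩

lemma addEdge_mono {V : Type*} {F : V → V → Prop} {a b u v : V}
    (h : Relation.ReflTransGen F u v) :
    Relation.ReflTransGen (addEdge F a b) u v :=
  Relation.ReflTransGen.mono (fun _ _ e => Or.inl e) _ _ h

lemma cycle_uses_new {V : Type*} {F : V → V → Prop} {a b v : V}
    (hF : Acyclic F) (h : Relation.TransGen (addEdge F a b) v v) :
    Relation.ReflTransGen F b a := by
  rcases (Relation.TransGen.head'_iff).1 h with ⟨w, e, hp⟩
  rcases e with e | ⟨rfl, rfl⟩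
  · rcases addEdge_split hp with h' | ⟨h1, h2⟩
    · exact absurd (Relation.TransGen.head' e h') (hF v)
    · exact h2.trans (Relation.ReflTransGen.head e h1)
  · rcases addEdge_split hp with h' | ⟨_, h2⟩
    · exact h'
    · exact h2

theorem sufficiency {V : Type*} (E : V → V → Prop) (i j x y : V)
    (hG : Acyclic E) (hij : ¬ E i j)
    (hG' : Acyclic (addEdge E i j))
    (hxy : ¬ addEdge E i j x y)
    (hnotCycG : Acyclic (addEdge E x y))
    (hndesc : ¬ Relation.ReflTransGen (addEdge E i j) j x)
    (hnanc : ¬ Relation.ReflTransGen (addEdge E i j) y i) :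
    Acyclic (addEdge (addEdge E i j) x y) := by
  intro v hcyc
  have hyx : Relation.ReflTransGen (addEdge E i j) y x := cycle_uses_new hG' hcyc
  rcases addEdge_split hyx with h | ⟨h1, _h2⟩
  · exact hnotCycG x (Relation.TransGen.head' (Or.inr ⟨rfl, rfl⟩) (addEdge_mono h))
  · exact hnanc (addEdge_mono h1)
end

section
/- Theorem 1 (full characterization): Let G_τ be a DAG with edge set E_τ, and let C_τ be the set of candidate edges (pairs not in E_τ) whose addition to G_τ creates a cycle. Suppose edge (i,j) ∉ C_τ is added, giving E_{τ+1} = E_τ ∪ {(i,j)}. Then the set C_{τ+1} of candidate edges (pairs not in E_{τ+1}) whose addition to G_{τ+1} creates a cycle equals C_τ ∪ Φ_{i,j}, where Φ_{i,j} = {(x,y) ∉ E_{τ+1} : x is a descendant of j in G_{τ+1} and y is an ancestor of i in G_{τ+1}}. -/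
private lemma tg_decomp {V : Type*} {E : V → V → Prop} {i j a b : V}
    (h : Relation.TransGen (addEdge E i j) a b) :
    Relation.TransGen E a b ∨
      (Relation.ReflTransGen E a i ∧ Relation.ReflTransGen E j b) := by
  induction h with
  | single h =>
    rcases h with h | ⟨rfl, rfl⟩
    · exact Or.inl (Relation.TransGen.single h)
    · exact Or.inr ⟨Relation.ReflTransGen.refl, Relation.ReflTransGen.refl⟩
  | tail _ hbc ih =>
    rcases hbc with h | ⟨rfl, rfl⟩
    · rcases ih with h1 | ⟨h1, h2⟩
      · exact Or.inl (h1.tail h)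
      · exact Or.inr ⟨h1, h2.tail h⟩
    · rcases ih with h1 | ⟨h1, h2⟩
      · exact Or.inr ⟨h1.to_reflTransGen, Relation.ReflTransGen.refl⟩
      · exact Or.inr ⟨h1, Relation.ReflTransGen.refl⟩

private lemma rtg_decomp {V : Type*} {E : V → V → Prop} {i j a b : V}
    (h : Relation.ReflTransGen (addEdge E i j) a b) :
    Relation.ReflTransGen E a b ∨
      (Relation.ReflTransGen E a i ∧ Relation.ReflTransGen E j b) := by
  induction h with
  | refl => exact Or.inl Relation.ReflTransGen.refl
  | tail _ hbc ih =>
    rcases hbc with h | ⟨rfl, rfl⟩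
    · rcases ih with h1 | ⟨h1, h2⟩
      · exact Or.inl (h1.tail h)
      · exact Or.inr ⟨h1, h2.tail h⟩
    · rcases ih with h1 | ⟨h1, h2⟩
      · exact Or.inr ⟨h1, Relation.ReflTransGen.refl⟩
      · exact Or.inr ⟨h1, Relation.ReflTransGen.refl⟩

private lemma not_acyclic_add_iff {V : Type*} {E : V → V → Prop} (hG : Acyclic E) (x y : V) :
    ¬ Acyclic (addEdge E x y) ↔ Relation.ReflTransGen E y x := by
  constructor
  · intro h
    rw [Acyclic] at h
    push_neg at h
    obtain ⟨v, hv⟩ := h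
    rcases tg_decomp hv with h1 | ⟨h1, h2⟩
    · exact absurd h1 (hG v)
    · exact h2.trans h1
  · intro h hA
    exact hA x (Relation.TransGen.head' (Or.inr ⟨rfl, rfl⟩)
      (Relation.ReflTransGen.mono (fun a b hab => Or.inl hab) _ _ h))

theorem cycle_inducing_update {V : Type*} (E : V → V → Prop) (i j : V)
    (hG : Acyclic E) (hij : ¬ E i j)
    (hG' : Acyclic (addEdge E i j)) :
    {p : V × V | ¬ addEdge E i j p.1 p.2 ∧
        ¬ Acyclic (addEdge (addEdge E i j) p.1 p.2)}
      = {p : V × V | ¬ E p.1 p.2 ∧ ¬ Acyclic (addEdge E p.1 p.2)}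
        ∪ {p : V × V | ¬ addEdge E i j p.1 p.2 ∧
            Relation.ReflTransGen (addEdge E i j) j p.1 ∧
            Relation.ReflTransGen (addEdge E i j) p.2 i} := by
  ext ⟨x, y⟩
  simp only [Set.mem_setOf_eq, Set.mem_union, not_acyclic_add_iff hG',
    not_acyclic_add_iff hG]
  constructor
  · rintro ⟨hne, hpath⟩
    rcases rtg_decomp hpath with h1 | ⟨h1, h2⟩
    · exact Or.inl ⟨fun hE => hne (Or.inl hE), h1⟩
    · exact Or.inr ⟨hne, Relation.ReflTransGen.mono (fun a b h => Or.inl h) _ _ h2, Relation.ReflTransGen.mono (fun a b h => Or.inl h) _ _ h1⟩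
  · rintro (⟨hne, hpath⟩ | ⟨hne, hjx, hyi⟩)
    · refine ⟨?_, Relation.ReflTransGen.mono (fun a b h => Or.inl h) _ _ hpath⟩
      rintro (hE | ⟨rfl, rfl⟩)
      · exact hne hE
      · exact hG' x (Relation.TransGen.head' (Or.inr ⟨rfl, rfl⟩)
          (Relation.ReflTransGen.mono (fun a b h => Or.inl h) _ _ hpath))
    · exact ⟨hne, hyi.trans ((Relation.ReflTransGen.single (show addEdge E i j i j from Or.inr ⟨rfl, rfl⟩)).trans hjx)⟩
end

section
/- Let G be a DAG, let (i,j) be addition-safe, and let G' = G ∪ {(i,j)}. Then the ancestor set (in G') of any vertex v satisfies: An_{G'}(v) = An_G(v) if j ∉ An_G(v), and An_{G'}(v) = An_G(v) ∪ An_G(i) if j ∈ An_G(v). -/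
lemma rtg_mono {V : Type*} (E : V → V → Prop) (i j : V) {a b : V}
    (h : Relation.ReflTransGen E a b) : Relation.ReflTransGen (addEdge E i j) a b :=
  Relation.ReflTransGen.mono (r := E) (p := addEdge E i j) (fun _ _ h => Or.inl h) _ _ h

lemma key {V : Type*} (E : V → V → Prop) (i j : V)
    (hG' : Acyclic (addEdge E i j)) {y v : V}
    (h : Relation.ReflTransGen (addEdge E i j) y v) :
    Relation.ReflTransGen E y v ∨
      (Relation.ReflTransGen E y i ∧ Relation.ReflTransGen E j v) := by
  induction h with
  | refl => exact Or.inl .refl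
  | tail hyb hbc ih =>
    rcases hbc with hE | ⟨hbi, hcj⟩
    · rcases ih with h1 | ⟨h1, h2⟩
      · exact Or.inl (h1.tail hE)
      · exact Or.inr ⟨h1, h2.tail hE⟩
    · rcases ih with h1 | ⟨h1, h2⟩
      · exact Or.inr ⟨hbi ▸ h1, hcj ▸ Relation.ReflTransGen.refl⟩
      · exfalso
        exact hG' j (Relation.TransGen.tail'
          (rtg_mono E i j (hbi ▸ h2)) (Or.inr ⟨rfl, rfl⟩))

theorem ancestors_after_add {V : Type*} (E : V → V → Prop) (i j : V)
    (hG : Acyclic E) (hG' : Acyclic (addEdge E i j)) (v : V) :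
    (¬ Relation.ReflTransGen E j v →
      {y : V | Relation.ReflTransGen (addEdge E i j) y v}
        = {y : V | Relation.ReflTransGen E y v}) ∧
    (Relation.ReflTransGen E j v →
      {y : V | Relation.ReflTransGen (addEdge E i j) y v}
        = {y : V | Relation.ReflTransGen E y v}
          ∪ {y : V | Relation.ReflTransGen E y i}) := by
  constructor
  · intro hjv
    ext y
    simp only [Set.mem_setOf_eq]
    constructor
    · intro h
      rcases key E i j hG' h with h1 | ⟨_, h2⟩
      · exact h1
      · exact absurd h2 hjv
    · exact rtg_mono E i j
  · intro hjv
    ext y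
    simp only [Set.mem_setOf_eq, Set.mem_union]
    constructor
    · intro h
      rcases key E i j hG' h with h1 | ⟨h1, _⟩
      · exact Or.inl h1
      · exact Or.inr h1
    · rintro (h | h)
      · exact rtg_mono E i j h
      · exact ((rtg_mono E i j h).tail (Or.inr ⟨rfl, rfl⟩)).trans (rtg_mono E i j hjv)
end
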